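/- Let D be a nonnegative random variable with continuous CDF F and density f, Q ≥ 0, p > 0. For π_R = p·min(Q,D) - w·Q, the variance satisfies Var(π_R) = p²[∫₀^Q 2(Q - t) F(t) dt - (∫₀^Q F(t) dt)²]. -/

import Mathlib

open MeasureTheory Set

private lemma aux_ind (Q d : ℝ) (hd : 0 ≤ d) (h : ℝ → ℝ) :
    ∫ t in Ioc (0:ℝ) Q, (Ici d).indicator h t = ∫ t in Ioc d Q, h t := by
  rw [setIntegral_indicator measurableSet_Ici]
  apply setIntegral_congr_set
  rw [MeasureTheory.ae_eq_set]
  constructor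
  · refine measure_mono_null (fun t ht => ?_) (Real.volume_singleton (a := d))
    simp only [mem_diff, mem_inter_iff, mem_Ioc, mem_Ici, mem_singleton_iff] at ht ⊢
    obtain ⟨⟨⟨ht0, htQ⟩, htd⟩, hnot⟩ := ht
    have : ¬ d < t := fun hlt => hnot ⟨hlt, htQ⟩
    linarith [not_lt.mp this]
  · refine measure_mono_null (fun t ht => ?_) (Real.volume_singleton (a := d))
    exfalso
    simp only [mem_diff, mem_inter_iff, mem_Ioc, mem_Ici] at ht
    obtain ⟨⟨htd, htQ⟩, hnot⟩ := ht
    exact hnot ⟨⟨lt_of_le_of_lt hd htd, htQ⟩, le_of_lt htd⟩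

private lemma auxA (Q d : ℝ) (hQ : 0 ≤ Q) (hd : 0 ≤ d) :
    ∫ t in Ioc (0:ℝ) Q, (Ici d).indicator (fun _ => (1:ℝ)) t = Q - min Q d := by
  rw [aux_ind Q d hd]
  rcases le_total d Q with hdQ | hdQ
  · rw [setIntegral_const, measureReal_def, Real.volume_Ioc, smul_eq_mul, mul_one,
      ENNReal.toReal_ofReal (by linarith), min_eq_right hdQ]
  · rw [Ioc_eq_empty (not_lt.mpr hdQ), min_eq_left hdQ]
    simp

private lemma auxB (Q d : ℝ) (hQ : 0 ≤ Q) (hd : 0 ≤ d) :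
    ∫ t in Ioc (0:ℝ) Q, (Ici d).indicator (fun t => 2 * (Q - t)) t
      = (Q - min Q d) ^ 2 := by
  rw [aux_ind Q d hd]
  rcases le_total d Q with hdQ | hdQ
  · rw [← intervalIntegral.integral_of_le hdQ, min_eq_right hdQ]
    have h1 : ∀ t : ℝ, 2 * (Q - t) = 2 * Q - 2 * t := fun t => by ring
    simp only [h1]
    rw [intervalIntegral.integral_sub intervalIntegrable_const
        (intervalIntegral.intervalIntegrable_id.const_mul 2),
      intervalIntegral.integral_const, intervalIntegral.integral_const_mul,
      integral_id, smul_eq_mul]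
    ring
  · rw [Ioc_eq_empty (not_lt.mpr hdQ), min_eq_left hdQ]
    simp

theorem variance_profit {Ω : Type*} [MeasurableSpace Ω]
    (P : Measure Ω) [IsProbabilityMeasure P]
    (D : Ω → ℝ) (hD : Measurable D) (hDnn : ∀ ω, 0 ≤ D ω)
    (F f : ℝ → ℝ)
    (hF : ∀ t, F t = (P {ω | D ω ≤ t}).toReal)
    (hFc : Continuous F)
    (hf : ∀ t, HasDerivAt F (f t) t) (hfnn : ∀ t, 0 ≤ f t)
    (Q p w : ℝ) (hQ : 0 ≤ Q) (hp : 0 < p) :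
    ∫ ω, (p * min Q (D ω) - w * Q
        - ∫ ω', (p * min Q (D ω') - w * Q) ∂P) ^ 2 ∂P
      = p ^ 2 * ((∫ t in (0:ℝ)..Q, 2 * (Q - t) * F t)
          - (∫ t in (0:ℝ)..Q, F t) ^ 2) := by
  classical
  set μ0 : Measure ℝ := volume.restrict (Ioc (0:ℝ) Q) with hμ0
  haveI : IsFiniteMeasure μ0 := by
    constructor
    rw [hμ0, Measure.restrict_apply_univ, Real.volume_Ioc]
    exact ENNReal.ofReal_lt_top
  set Y : Ω → ℝ := fun ω => Q - min Q (D ω) with hYdef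
  have hYmeas : Measurable Y := measurable_const.sub (measurable_const.min hD)
  have hYnn : ∀ ω, 0 ≤ Y ω := fun ω => by
    simp only [hYdef, sub_nonneg]; exact min_le_left _ _
  have hYle : ∀ ω, Y ω ≤ Q := fun ω => by
    simp only [hYdef]
    have : 0 ≤ min Q (D ω) := le_min hQ (hDnn ω)
    linarith
  have hYint : Integrable Y P := by
    refine (integrable_const Q).mono' hYmeas.aestronglyMeasurable ?_
    exact Filter.Eventually.of_forall fun ω => by
      rw [Real.norm_eq_abs, abs_of_nonneg (hYnn ω)]; exact hYle ω
  have hY2int : Integrable (fun ω => Y ω ^ 2) P := by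
    refine (integrable_const (Q ^ 2)).mono'
      (hYmeas.pow_const 2).aestronglyMeasurable ?_
    exact Filter.Eventually.of_forall fun ω => by
      rw [Real.norm_eq_abs, abs_of_nonneg (sq_nonneg _)]
      exact pow_le_pow_left₀ (hYnn ω) (hYle ω) 2
  -- the measurable set on the product
  set S : Set (Ω × ℝ) := {q | D q.1 ≤ q.2} with hSdef
  have hS : MeasurableSet S := measurableSet_le (hD.comp measurable_fst) measurable_snd
  have hae : ∀ᵐ q ∂(P.prod μ0), q.2 ∈ Ioc (0:ℝ) Q := by
    rw [Filter.eventually_iff, mem_ae_iff]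
    have hset : {q : Ω × ℝ | q.2 ∈ Ioc (0:ℝ) Q}ᶜ = (univ : Set Ω) ×ˢ (Ioc (0:ℝ) Q)ᶜ := by
      ext q; simp
    rw [hset, Measure.prod_prod]
    have : μ0 (Ioc (0:ℝ) Q)ᶜ = 0 := by
      rw [hμ0, Measure.restrict_apply measurableSet_Ioc.compl]
      simp
    rw [this, mul_zero]
  -- sections of indicators
  have hsec_t : ∀ (c : ℝ → ℝ) (ω : Ω),
      (fun t => S.indicator (fun q => c q.2) (ω, t)) = (Ici (D ω)).indicator c := by
    intro c ω; funext t
    simp only [indicator_apply, hSdef, mem_setOf_eq, mem_Ici]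
  have hsec_ω : ∀ (c : ℝ → ℝ) (t : ℝ),
      (fun ω => S.indicator (fun q => c q.2) (ω, t))
        = ({ω | D ω ≤ t}).indicator (fun _ => c t) := by
    intro c t; funext ω
    simp only [indicator_apply, hSdef, mem_setOf_eq]
  have hDset : ∀ t : ℝ, MeasurableSet {ω | D ω ≤ t} := fun t => hD measurableSet_Iic
  -- Fubini for both moments
  have hswap : ∀ c : ℝ → ℝ, (∃ C : ℝ, ∀ᵐ q ∂(P.prod μ0), ‖S.indicator (fun q => c q.2) q‖ ≤ C) →
      Measurable c →
      ∫ ω, (∫ t, S.indicator (fun q => c q.2) (ω, t) ∂μ0) ∂P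
        = ∫ t, (∫ ω, S.indicator (fun q => c q.2) (ω, t) ∂P) ∂μ0 := by
    intro c hC hc
    apply integral_integral_swap
    obtain ⟨C, hbound⟩ := hC
    refine (integrable_const C).mono' ?_ hbound
    exact (((hc.comp measurable_snd).indicator hS)).aestronglyMeasurable
  -- first moment
  have hEY : ∫ ω, Y ω ∂P = ∫ t, F t ∂μ0 := by
    have h1 : ∀ ω, Y ω = ∫ t, S.indicator (fun q => (fun _ => (1:ℝ)) q.2) (ω, t) ∂μ0 := by
      intro ω
      rw [hsec_t (fun _ => (1:ℝ)) ω, hμ0]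
      exact (auxA Q (D ω) hQ (hDnn ω)).symm
    calc ∫ ω, Y ω ∂P
        = ∫ ω, (∫ t, S.indicator (fun q => (fun _ => (1:ℝ)) q.2) (ω, t) ∂μ0) ∂P := by
          exact integral_congr_ae (Filter.Eventually.of_forall h1)
      _ = ∫ t, (∫ ω, S.indicator (fun q => (fun _ => (1:ℝ)) q.2) (ω, t) ∂P) ∂μ0 := by
          refine hswap (fun _ => (1:ℝ)) ⟨1, Filter.Eventually.of_forall fun q => ?_⟩ measurable_const
          rw [Real.norm_eq_abs]
          rcases indicator_eq_zero_or_self S (fun _ => (1:ℝ)) q with h | h <;> rw [h] <;> norm_num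
      _ = ∫ t, F t ∂μ0 := by
          refine integral_congr_ae (Filter.Eventually.of_forall fun t => ?_)
          beta_reduce
          rw [hsec_ω (fun _ => (1:ℝ)) t, integral_indicator_const _ (hDset t), hF t,
            smul_eq_mul, mul_one, measureReal_def]
  -- second moment
  have hEY2 : ∫ ω, Y ω ^ 2 ∂P = ∫ t, 2 * (Q - t) * F t ∂μ0 := by
    have h1 : ∀ ω, Y ω ^ 2 = ∫ t, S.indicator (fun q => 2 * (Q - q.2)) (ω, t) ∂μ0 := by
      intro ω
      rw [show (fun q : Ω × ℝ => 2 * (Q - q.2)) = (fun q : Ω × ℝ => (fun t => 2 * (Q - t)) q.2) from rfl,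
        hsec_t (fun t => 2 * (Q - t)) ω, hμ0]
      exact (auxB Q (D ω) hQ (hDnn ω)).symm
    calc ∫ ω, Y ω ^ 2 ∂P
        = ∫ ω, (∫ t, S.indicator (fun q => (fun t => 2 * (Q - t)) q.2) (ω, t) ∂μ0) ∂P := by
          exact integral_congr_ae (Filter.Eventually.of_forall h1)
      _ = ∫ t, (∫ ω, S.indicator (fun q => (fun t => 2 * (Q - t)) q.2) (ω, t) ∂P) ∂μ0 := by
          refine hswap (fun t => 2 * (Q - t)) ⟨2 * Q, ?_⟩ (by fun_prop)
          filter_upwards [hae] with q hq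
          rw [Real.norm_eq_abs]
          rcases indicator_eq_zero_or_self S (fun q : Ω × ℝ => (fun t => 2 * (Q - t)) q.2) q
            with h | h <;> rw [h]
          · rw [abs_zero]; linarith
          · obtain ⟨hq1, hq2⟩ := hq
            beta_reduce
            rw [abs_of_nonneg (by linarith)]
            linarith
      _ = ∫ t, 2 * (Q - t) * F t ∂μ0 := by
          refine integral_congr_ae (Filter.Eventually.of_forall fun t => ?_)
          beta_reduce
          rw [hsec_ω (fun t => 2 * (Q - t)) t, integral_indicator_const _ (hDset t), hF t,
            smul_eq_mul, mul_comm, measureReal_def]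
  set A : ℝ := ∫ t, F t ∂μ0 with hA
  set B : ℝ := ∫ t, 2 * (Q - t) * F t ∂μ0 with hB
  -- compute the mean
  have hrw : ∀ ω, p * min Q (D ω) - w * Q = (p * Q - w * Q) - p * Y ω := by
    intro ω; simp only [hYdef]; ring
  have hmean : ∫ ω', (p * min Q (D ω') - w * Q) ∂P = (p * Q - w * Q) - p * A := by
    simp only [hrw]
    rw [integral_sub (integrable_const _) (hYint.const_mul p), integral_const,
      measureReal_def, measure_univ, ENNReal.toReal_one, one_smul, integral_const_mul, hEY]
  rw [hmean]
  have hptw : ∀ ω, (p * min Q (D ω) - w * Q - ((p * Q - w * Q) - p * A)) ^ 2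
      = p ^ 2 * (Y ω ^ 2 - 2 * A * Y ω + A ^ 2) := by
    intro ω
    rw [hrw ω]; ring
  simp only [hptw]
  have h2 : Integrable (fun ω => 2 * A * Y ω) P := hYint.const_mul _
  have h3 : Integrable (fun ω => Y ω ^ 2 - 2 * A * Y ω) P := hY2int.sub h2
  rw [integral_const_mul, integral_add h3 (integrable_const _), integral_sub hY2int h2,
    integral_const_mul, hEY, hEY2, integral_const, measureReal_def, measure_univ, ENNReal.toReal_one, one_smul,
    intervalIntegral.integral_of_le hQ, intervalIntegral.integral_of_le hQ, ← hA, ← hB]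
  ring
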